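/- Let F be a sparseness measure with cost function J on ℝⁿ, let A be an m×n real matrix, and let k ≥ 1. Then A satisfies RRC at sparsity k for J with some constant C > 0 if and only if there exists d > 0 such that every linear subspace ν' of ℝⁿ with dim ν' = dim(ker A) and ‖P_{ker A} − P_{ν'}‖ ≤ d satisfies NSP at sparsity k for J. (This is the statement that the set of null spaces satisfying RRC is exactly the interior, in the projection metric on subspaces of fixed dimension, of the set of null spaces satisfying the exact recovery condition.) -/

import Mathlib

noncomputable section

/-- `F : ℝ → ℝ` is a sparseness measure: nonnegative on `[0,∞)`,
vanishing exactly at `0`, and `F (|·|)` is subadditive on `ℝ`. -/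
def SparsenessMeasure (F : ℝ → ℝ) : Prop :=
  (∀ t : ℝ, 0 ≤ t → 0 ≤ F t) ∧
  (∀ t : ℝ, 0 ≤ t → (F t = 0 ↔ t = 0)) ∧
  (∀ x y : ℝ, F |x + y| ≤ F |x| + F |y|)

/-- The cost function `J(x) = ∑ i, F |x i|` on `ℝⁿ`. -/
def costJ {n : ℕ} (F : ℝ → ℝ) (x : EuclideanSpace ℝ (Fin n)) : ℝ :=
  ∑ i, F |x i|

/-- The restricted cost `J(x_T) = ∑ i ∈ T, F |x i|`. -/
def costJT {n : ℕ} (F : ℝ → ℝ) (T : Finset (Fin n)) (x : EuclideanSpace ℝ (Fin n)) : ℝ :=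
  ∑ i ∈ T, F |x i|

/-- `x` has at most `k` nonzero entries. -/
def Sparse {n : ℕ} (k : ℕ) (x : EuclideanSpace ℝ (Fin n)) : Prop :=
  ∃ T : Finset (Fin n), T.card ≤ k ∧ ∀ i ∉ T, x i = 0

/-- The matrix `A` acting as a continuous linear map between Euclidean spaces. -/
def mulVecCLM {m n : ℕ} (A : Matrix (Fin m) (Fin n) ℝ) :
    EuclideanSpace ℝ (Fin n) →L[ℝ] EuclideanSpace ℝ (Fin m) :=
  (((EuclideanSpace.equiv (Fin m) ℝ).symm : (Fin m → ℝ) →L[ℝ] EuclideanSpace ℝ (Fin m)).comp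
    (Matrix.mulVecLin A).toContinuousLinearMap).comp
    ((EuclideanSpace.equiv (Fin n) ℝ) : EuclideanSpace ℝ (Fin n) →L[ℝ] (Fin n → ℝ))

/-- `A` satisfies the robust recovery condition at sparsity `k` for the cost `J_F`
with constant `C`: for every `k`-sparse `x̄`, every `ε > 0`, every noise `v` with
`‖v‖ ≤ ε`, and every feasible `x̂` with `J(x̂) ≤ J(x̄)`, one has `‖x̄ - x̂‖ ≤ C ε`. -/
def RRC {m n : ℕ} (A : Matrix (Fin m) (Fin n) ℝ) (k : ℕ) (F : ℝ → ℝ) (C : ℝ) : Prop :=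
  ∀ xbar : EuclideanSpace ℝ (Fin n), Sparse k xbar →
    ∀ ε : ℝ, 0 < ε →
      ∀ v : EuclideanSpace ℝ (Fin m), ‖v‖ ≤ ε →
        ∀ xhat : EuclideanSpace ℝ (Fin n),
          ‖mulVecCLM A xhat - (mulVecCLM A xbar + v)‖ ≤ ε →
            costJ F xhat ≤ costJ F xbar → ‖xbar - xhat‖ ≤ C * ε

/-- The robust null space condition with parameter `d` for `(A, k, J_F)`. -/
def RNSP {m n : ℕ} (A : Matrix (Fin m) (Fin n) ℝ) (k : ℕ) (F : ℝ → ℝ) (d : ℝ) : Prop :=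
  ∀ z ∈ LinearMap.ker (mulVecCLM A : EuclideanSpace ℝ (Fin n) →ₗ[ℝ] EuclideanSpace ℝ (Fin m)), z ≠ 0 →
    ∀ η : EuclideanSpace ℝ (Fin n), ‖η‖ < d * ‖z‖ →
      ∀ T : Finset (Fin n), T.card ≤ k →
        costJT F T (z + η) < costJT F Tᶜ (z + η)

/-- The subspace `ν` satisfies the null space property at sparsity `k` for `J_F`. -/
def NSP {n : ℕ} (ν : Submodule ℝ (EuclideanSpace ℝ (Fin n))) (k : ℕ) (F : ℝ → ℝ) : Prop :=
  ∀ z ∈ ν, z ≠ 0 → ∀ T : Finset (Fin n), T.card ≤ k → costJT F T z < costJT F Tᶜ z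

/-- The orthogonal projection onto `ν`, as a continuous linear map `ℝⁿ → ℝⁿ`. -/
def projCLM {n : ℕ} (ν : Submodule ℝ (EuclideanSpace ℝ (Fin n))) :
    EuclideanSpace ℝ (Fin n) →L[ℝ] EuclideanSpace ℝ (Fin n) :=
  ν.subtypeL.comp (ν.orthogonalProjectionOnto)

open scoped InnerProductSpace

section Aux
variable {n : ℕ}

variable {n : ℕ}

lemma eq_orthogonalProjection_of_mem_of_inner_eq_zero {K : Submodule ℝ (EuclideanSpace ℝ (Fin n))}
    {u v : EuclideanSpace ℝ (Fin n)} (hvm : v ∈ K) (hvo : ∀ w ∈ K, ⟪u - v, w⟫_ℝ = 0) :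
    (K.orthogonalProjectionOnto u : EuclideanSpace ℝ (Fin n)) = v :=
  Submodule.eq_starProjection_of_mem_of_inner_eq_zero hvm hvo

lemma orthogonalProjection_inner_eq_zero {K : Submodule ℝ (EuclideanSpace ℝ (Fin n))}
    (v w : EuclideanSpace ℝ (Fin n)) (hw : w ∈ K) :
    ⟪v - (K.orthogonalProjectionOnto v : EuclideanSpace ℝ (Fin n)), w⟫_ℝ = 0 :=
  Submodule.starProjection_inner_eq_zero v w hw

lemma sub_orthogonalProjection_mem_orthogonal {K : Submodule ℝ (EuclideanSpace ℝ (Fin n))}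
    (v : EuclideanSpace ℝ (Fin n)) :
    v - (K.orthogonalProjectionOnto v : EuclideanSpace ℝ (Fin n)) ∈ Kᗮ :=
  Submodule.sub_starProjection_mem_orthogonal v

lemma orthogonalProjection_eq_self_iff {K : Submodule ℝ (EuclideanSpace ℝ (Fin n))}
    {v : EuclideanSpace ℝ (Fin n)} :
    (K.orthogonalProjectionOnto v : EuclideanSpace ℝ (Fin n)) = v ↔ v ∈ K :=
  Submodule.starProjection_eq_self_iff

lemma orthogonalProjection_unit_singleton (𝕜 : Type*) [RCLike 𝕜] {E : Type*} [NormedAddCommGroup E]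
    [InnerProductSpace 𝕜 E] {v : E} (hv : ‖v‖ = 1) (w : E) :
    ((𝕜 ∙ v).orthogonalProjectionOnto w : E) = ⟪v, w⟫_𝕜 • v :=
  Submodule.starProjection_unit_singleton 𝕜 hv w

lemma eq_orthogonalProjection_of_eq_submodule {K K' : Submodule ℝ (EuclideanSpace ℝ (Fin n))}
    (h : K = K') (u : EuclideanSpace ℝ (Fin n)) :
    (K.orthogonalProjectionOnto u : EuclideanSpace ℝ (Fin n)) =
      (K'.orthogonalProjectionOnto u : EuclideanSpace ℝ (Fin n)) := by
  subst h; rfl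

lemma orthogonalProjection_norm_le {𝕜 : Type*} [RCLike 𝕜] {E : Type*} [NormedAddCommGroup E]
    [InnerProductSpace 𝕜 E] (K : Submodule 𝕜 E) [K.HasOrthogonalProjection] :
    ‖K.orthogonalProjectionOnto‖ ≤ 1 :=
  Submodule.orthogonalProjectionOnto_norm_le K

lemma projCLM_apply_aux (K : Submodule ℝ (EuclideanSpace ℝ (Fin n)))
    (x : EuclideanSpace ℝ (Fin n)) :
    projCLM K x = (Submodule.orthogonalProjectionOnto K x : EuclideanSpace ℝ (Fin n)) := rfl

-- placeholders from aux1 (assume compiled): proj_sup_aux, inf_orth_sup_aux,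
-- finrank_sup_span_aux, unit_diff_aux, rankone_diff_aux

lemma proj_sup_aux {W : Submodule ℝ (EuclideanSpace ℝ (Fin n))} {a : EuclideanSpace ℝ (Fin n)}
    (h : ∀ w ∈ W, ⟪w, a⟫_ℝ = 0) (x : EuclideanSpace ℝ (Fin n)) :
    (Submodule.orthogonalProjectionOnto (W ⊔ (ℝ ∙ a)) x : EuclideanSpace ℝ (Fin n)) =
      (Submodule.orthogonalProjectionOnto W x : EuclideanSpace ℝ (Fin n)) +
      (Submodule.orthogonalProjectionOnto (ℝ ∙ a) x : EuclideanSpace ℝ (Fin n)) := by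
  apply eq_orthogonalProjection_of_mem_of_inner_eq_zero
  · exact Submodule.add_mem _ (Submodule.mem_sup_left (Submodule.orthogonalProjectionOnto W x).2)
      (Submodule.mem_sup_right (Submodule.orthogonalProjectionOnto (ℝ ∙ a) x).2)
  · intro w hw
    obtain ⟨w1, hw1, w2, hw2, rfl⟩ := Submodule.mem_sup.1 hw
    obtain ⟨cst, rfl⟩ := Submodule.mem_span_singleton.1 hw2
    have h1 : ⟪x - (Submodule.orthogonalProjectionOnto W x : EuclideanSpace ℝ (Fin n)), w1⟫_ℝ = 0 :=
      orthogonalProjection_inner_eq_zero x w1 hw1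
    have h2 : ⟪x - (Submodule.orthogonalProjectionOnto (ℝ ∙ a) x : EuclideanSpace ℝ (Fin n)), cst • a⟫_ℝ = 0 :=
      orthogonalProjection_inner_eq_zero x _ (Submodule.smul_mem _ _ (Submodule.mem_span_singleton_self a))
    have h3 : ⟪(Submodule.orthogonalProjectionOnto (ℝ ∙ a) x : EuclideanSpace ℝ (Fin n)), w1⟫_ℝ = 0 := by
      obtain ⟨ct, hct⟩ := Submodule.mem_span_singleton.1 (Submodule.orthogonalProjectionOnto (ℝ ∙ a) x).2
      rw [← hct, real_inner_smul_left, real_inner_comm, h w1 hw1, mul_zero]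
    have h4 : ⟪(Submodule.orthogonalProjectionOnto W x : EuclideanSpace ℝ (Fin n)), cst • a⟫_ℝ = 0 := by
      rw [real_inner_smul_right, h _ (Submodule.orthogonalProjectionOnto W x).2, mul_zero]
    simp only [inner_sub_left, inner_add_left, inner_add_right] at h1 h2 ⊢
    linarith

lemma inf_orth_sup_aux {ν : Submodule ℝ (EuclideanSpace ℝ (Fin n))} {u : EuclideanSpace ℝ (Fin n)}
    (hu : u ∈ ν) : (ν ⊓ (ℝ ∙ u)ᗮ) ⊔ (ℝ ∙ u) = ν := by
  have hs : (ℝ ∙ u) ≤ ν := (Submodule.span_singleton_le_iff_mem _ _).2 hu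
  apply le_antisymm
  · exact sup_le inf_le_left hs
  · intro w hw
    have h1 : w - (Submodule.orthogonalProjectionOnto (ℝ ∙ u) w : EuclideanSpace ℝ (Fin n)) ∈ ν ⊓ (ℝ ∙ u)ᗮ :=
      ⟨Submodule.sub_mem _ hw (hs (Submodule.orthogonalProjectionOnto (ℝ ∙ u) w).2),
       sub_orthogonalProjection_mem_orthogonal w⟩
    have h2 : w = (w - (Submodule.orthogonalProjectionOnto (ℝ ∙ u) w : EuclideanSpace ℝ (Fin n))) +
        (Submodule.orthogonalProjectionOnto (ℝ ∙ u) w : EuclideanSpace ℝ (Fin n)) := by abel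
    rw [h2]
    exact Submodule.add_mem _ (Submodule.mem_sup_left h1)
      (Submodule.mem_sup_right (Submodule.orthogonalProjectionOnto (ℝ ∙ u) w).2)

lemma finrank_sup_span_aux {W : Submodule ℝ (EuclideanSpace ℝ (Fin n))}
    {a : EuclideanSpace ℝ (Fin n)} (ha : a ≠ 0) (h : ∀ w ∈ W, ⟪w, a⟫_ℝ = 0) :
    Module.finrank ℝ (W ⊔ (ℝ ∙ a) : Submodule ℝ (EuclideanSpace ℝ (Fin n)))
      = Module.finrank ℝ W + 1 := by
  have hdisj : W ⊓ (ℝ ∙ a) = ⊥ := by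
    rw [Submodule.eq_bot_iff]
    rintro x ⟨hxW, hxa⟩
    obtain ⟨c, rfl⟩ := Submodule.mem_span_singleton.1 hxa
    have h0 := h _ hxW
    rw [real_inner_smul_left] at h0
    rcases mul_eq_zero.1 h0 with hc | hip
    · rw [hc, zero_smul]
    · exact absurd (inner_self_eq_zero.1 hip) ha
  have h2 := Submodule.finrank_sup_add_finrank_inf_eq W (ℝ ∙ a)
  rw [hdisj, finrank_span_singleton ha] at h2
  simpa using h2

lemma unit_diff_aux {u z : EuclideanSpace ℝ (Fin n)} (hu : u ≠ 0) :
    ‖‖u‖⁻¹ • u - ‖z‖⁻¹ • z‖ ≤ 2 * ‖u - z‖ / ‖u‖ := by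
  have hun : (0:ℝ) < ‖u‖ := norm_pos_iff.2 hu
  by_cases hz : z = 0
  · rw [hz]
    simp only [norm_zero, inv_zero, zero_smul, sub_zero, norm_smul, norm_inv, norm_norm]
    rw [inv_mul_cancel₀ hun.ne']
    rw [le_div_iff₀ hun]
    nlinarith
  · have hzn : (0:ℝ) < ‖z‖ := norm_pos_iff.2 hz
    have key : ‖u‖⁻¹ • u - ‖z‖⁻¹ • z = ‖u‖⁻¹ • (u - z) + (‖u‖⁻¹ - ‖z‖⁻¹) • z := by
      rw [smul_sub, sub_smul]; abel
    rw [key]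
    have h1 : ‖‖u‖⁻¹ • (u - z)‖ = ‖u - z‖ / ‖u‖ := by
      rw [norm_smul, norm_inv, norm_norm, div_eq_inv_mul]
    have habs : |‖z‖ - ‖u‖| ≤ ‖u - z‖ := by
      rw [abs_sub_comm]
      exact (abs_norm_sub_norm_le u z)
    have h2 : ‖(‖u‖⁻¹ - ‖z‖⁻¹) • z‖ ≤ ‖u - z‖ / ‖u‖ := by
      rw [norm_smul, Real.norm_eq_abs, inv_sub_inv hun.ne' hzn.ne', abs_div,
        abs_of_pos (mul_pos hun hzn)]
      calc |‖z‖ - ‖u‖| / (‖u‖ * ‖z‖) * ‖z‖ = |‖z‖ - ‖u‖| / ‖u‖ := by field_simp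
        _ ≤ ‖u - z‖ / ‖u‖ := div_le_div_of_nonneg_right habs hun.le
    calc ‖‖u‖⁻¹ • (u - z) + (‖u‖⁻¹ - ‖z‖⁻¹) • z‖
        ≤ ‖‖u‖⁻¹ • (u - z)‖ + ‖(‖u‖⁻¹ - ‖z‖⁻¹) • z‖ := norm_add_le _ _
      _ ≤ ‖u - z‖ / ‖u‖ + ‖u - z‖ / ‖u‖ := by rw [h1]; linarith
      _ = 2 * ‖u - z‖ / ‖u‖ := by ring

lemma rankone_diff_aux {u z : EuclideanSpace ℝ (Fin n)} (hu : ‖u‖ = 1) (hz : ‖z‖ = 1)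
    (x : EuclideanSpace ℝ (Fin n)) :
    ‖(Submodule.orthogonalProjectionOnto (ℝ ∙ u) x : EuclideanSpace ℝ (Fin n)) -
      (Submodule.orthogonalProjectionOnto (ℝ ∙ z) x : EuclideanSpace ℝ (Fin n))‖ ≤ 2 * ‖u - z‖ * ‖x‖ := by
  rw [orthogonalProjection_unit_singleton ℝ hu x, orthogonalProjection_unit_singleton ℝ hz x]
  have key : ⟪u,x⟫_ℝ • u - ⟪z,x⟫_ℝ • z = ⟪u - z, x⟫_ℝ • u + ⟪z,x⟫_ℝ • (u - z) := by
    rw [inner_sub_left, sub_smul, smul_sub]; abel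
  rw [key]
  have h1 : ‖⟪u - z, x⟫_ℝ • u‖ ≤ ‖u - z‖ * ‖x‖ := by
    rw [norm_smul, hu, mul_one, Real.norm_eq_abs]
    exact abs_real_inner_le_norm _ _
  have h2 : ‖⟪z,x⟫_ℝ • (u - z)‖ ≤ ‖x‖ * ‖u - z‖ := by
    rw [norm_smul, Real.norm_eq_abs]
    have h3 := abs_real_inner_le_norm z x
    rw [hz, one_mul] at h3
    exact mul_le_mul_of_nonneg_right h3 (norm_nonneg _)
  calc ‖⟪u - z, x⟫_ℝ • u + ⟪z,x⟫_ℝ • (u - z)‖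
      ≤ ‖⟪u - z, x⟫_ℝ • u‖ + ‖⟪z,x⟫_ℝ • (u - z)‖ := norm_add_le _ _
    _ ≤ ‖u - z‖ * ‖x‖ + ‖x‖ * ‖u - z‖ := add_le_add h1 h2
    _ = 2 * ‖u - z‖ * ‖x‖ := by ring



lemma rankone_diff2_aux {u s : EuclideanSpace ℝ (Fin n)} (hu0 : u ≠ 0)
    (x : EuclideanSpace ℝ (Fin n)) :
    ‖(Submodule.orthogonalProjectionOnto (ℝ ∙ u) x : EuclideanSpace ℝ (Fin n)) -
      (Submodule.orthogonalProjectionOnto (ℝ ∙ s) x : EuclideanSpace ℝ (Fin n))‖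
      ≤ 4 * ‖u - s‖ / ‖u‖ * ‖x‖ := by
  have hun : (0:ℝ) < ‖u‖ := norm_pos_iff.2 hu0
  by_cases hs0 : s = 0
  · subst hs0
    rw [eq_orthogonalProjection_of_eq_submodule (Submodule.span_zero_singleton ℝ) x,
      Submodule.orthogonalProjectionOnto_bot]
    simp only [ContinuousLinearMap.zero_apply, ZeroMemClass.coe_zero, sub_zero, sub_zero]
    have h1 : ‖(Submodule.orthogonalProjectionOnto (ℝ ∙ u) x : EuclideanSpace ℝ (Fin n))‖ ≤ ‖x‖ := by
      have := (Submodule.orthogonalProjectionOnto (ℝ ∙ u)).le_opNorm x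
      have h2 := orthogonalProjection_norm_le (ℝ ∙ u) (𝕜 := ℝ)
      calc ‖(Submodule.orthogonalProjectionOnto (ℝ ∙ u) x : EuclideanSpace ℝ (Fin n))‖
          = ‖Submodule.orthogonalProjectionOnto (ℝ ∙ u) x‖ := rfl
        _ ≤ ‖Submodule.orthogonalProjectionOnto (ℝ ∙ u) (E := EuclideanSpace ℝ (Fin n))‖ * ‖x‖ := this
        _ ≤ 1 * ‖x‖ := by nlinarith [norm_nonneg x]
        _ = ‖x‖ := one_mul _
    have h3 : 4 * ‖u‖ / ‖u‖ * ‖x‖ = 4 * ‖x‖ := by field_simp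
    rw [h3]
    nlinarith [norm_nonneg x]
  · have hsn : (0:ℝ) < ‖s‖ := norm_pos_iff.2 hs0
    have hspanu : (ℝ ∙ u) = ℝ ∙ (‖u‖⁻¹ • u) :=
      (Submodule.span_singleton_smul_eq (isUnit_iff_ne_zero.2 (inv_ne_zero hun.ne')) u).symm
    have hspans : (ℝ ∙ s) = ℝ ∙ (‖s‖⁻¹ • s) :=
      (Submodule.span_singleton_smul_eq (isUnit_iff_ne_zero.2 (inv_ne_zero hsn.ne')) s).symm
    rw [eq_orthogonalProjection_of_eq_submodule hspanu x,
      eq_orthogonalProjection_of_eq_submodule hspans x]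
    have hnu : ‖‖u‖⁻¹ • u‖ = 1 := norm_smul_inv_norm hu0
    have hns : ‖‖s‖⁻¹ • s‖ = 1 := norm_smul_inv_norm hs0
    calc ‖(Submodule.orthogonalProjectionOnto (ℝ ∙ (‖u‖⁻¹ • u)) x : EuclideanSpace ℝ (Fin n)) -
          (Submodule.orthogonalProjectionOnto (ℝ ∙ (‖s‖⁻¹ • s)) x : EuclideanSpace ℝ (Fin n))‖
        ≤ 2 * ‖‖u‖⁻¹ • u - ‖s‖⁻¹ • s‖ * ‖x‖ := rankone_diff_aux hnu hns x
      _ ≤ 2 * (2 * ‖u - s‖ / ‖u‖) * ‖x‖ := by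
          have := unit_diff_aux (z := s) hu0
          have hx := norm_nonneg x
          nlinarith [norm_nonneg (‖u‖⁻¹ • u - ‖s‖⁻¹ • s)]
      _ = 4 * ‖u - s‖ / ‖u‖ * ‖x‖ := by ring

lemma perturbed_subspace_aux {ν : Submodule ℝ (EuclideanSpace ℝ (Fin n))}
    {u q : EuclideanSpace ℝ (Fin n)} (humem : u ∈ ν) (hu0 : u ≠ 0) (hqmem : q ∈ νᗮ) :
    ∃ ν'' : Submodule ℝ (EuclideanSpace ℝ (Fin n)), (u + q) ∈ ν'' ∧
      Module.finrank ℝ ν'' = Module.finrank ℝ ν ∧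
      ‖projCLM ν - projCLM ν''‖ ≤ 4 * ‖q‖ / ‖u‖ := by
  have hun : (0:ℝ) < ‖u‖ := norm_pos_iff.2 hu0
  have huq : ⟪u, q⟫_ℝ = 0 := (Submodule.mem_orthogonal _ _).1 hqmem u humem
  set s := u + q with hs
  have hs0 : s ≠ 0 := by
    intro h
    have hqe : q = -u := eq_neg_of_add_eq_zero_right h
    rw [hqe, inner_neg_right, neg_eq_zero, inner_self_eq_zero] at huq
    exact hu0 huq
  set W := ν ⊓ (ℝ ∙ u)ᗮ with hW
  have hWu : ∀ w ∈ W, ⟪w, u⟫_ℝ = 0 := fun w hw => by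
    rw [real_inner_comm]
    exact (Submodule.mem_orthogonal _ _).1 hw.2 u (Submodule.mem_span_singleton_self u)
  have hWq : ∀ w ∈ W, ⟪w, q⟫_ℝ = 0 := fun w hw =>
    (Submodule.mem_orthogonal _ _).1 hqmem w hw.1
  have hWs : ∀ w ∈ W, ⟪w, s⟫_ℝ = 0 := fun w hw => by
    rw [hs, inner_add_right, hWu w hw, hWq w hw, add_zero]
  have hνW : W ⊔ (ℝ ∙ u) = ν := inf_orth_sup_aux humem
  refine ⟨W ⊔ (ℝ ∙ s), Submodule.mem_sup_right (Submodule.mem_span_singleton_self s), ?_, ?_⟩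
  · rw [finrank_sup_span_aux hs0 hWs, ← hνW, finrank_sup_span_aux hu0 hWu]
  · rw [← hνW]
    have hb : (0:ℝ) ≤ 4 * ‖q‖ / ‖u‖ := by positivity
    apply ContinuousLinearMap.opNorm_le_bound _ hb
    intro x
    rw [ContinuousLinearMap.sub_apply, projCLM_apply_aux, projCLM_apply_aux,
      proj_sup_aux hWu x, proj_sup_aux hWs x]
    have e : ((Submodule.orthogonalProjectionOnto W x : EuclideanSpace ℝ (Fin n)) +
        (Submodule.orthogonalProjectionOnto (ℝ ∙ u) x : EuclideanSpace ℝ (Fin n))) -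
        ((Submodule.orthogonalProjectionOnto W x : EuclideanSpace ℝ (Fin n)) +
        (Submodule.orthogonalProjectionOnto (ℝ ∙ s) x : EuclideanSpace ℝ (Fin n))) =
        (Submodule.orthogonalProjectionOnto (ℝ ∙ u) x : EuclideanSpace ℝ (Fin n)) -
        (Submodule.orthogonalProjectionOnto (ℝ ∙ s) x : EuclideanSpace ℝ (Fin n)) := by abel
    rw [e]
    have hus : ‖u - s‖ = ‖q‖ := by
      rw [hs]
      have : u - (u + q) = -q := by abel
      rw [this, norm_neg]
    calc ‖(Submodule.orthogonalProjectionOnto (ℝ ∙ u) x : EuclideanSpace ℝ (Fin n)) -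
          (Submodule.orthogonalProjectionOnto (ℝ ∙ s) x : EuclideanSpace ℝ (Fin n))‖
        ≤ 4 * ‖u - s‖ / ‖u‖ * ‖x‖ := rankone_diff2_aux hu0 x
      _ = 4 * ‖q‖ / ‖u‖ * ‖x‖ := by rw [hus]


lemma exists_lower_aux {m n : ℕ} (A : Matrix (Fin m) (Fin n) ℝ) :
    ∃ c : ℝ, 0 < c ∧ ∀ q ∈ (LinearMap.ker (mulVecCLM A : EuclideanSpace ℝ (Fin n) →ₗ[ℝ] EuclideanSpace ℝ (Fin m)))ᗮ, ‖q‖ ≤ c * ‖mulVecCLM A q‖ := by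
  set B := mulVecCLM A with hB
  set K := (LinearMap.ker (B : EuclideanSpace ℝ (Fin n) →ₗ[ℝ] EuclideanSpace ℝ (Fin m)))ᗮ with hK
  set g : K →ₗ[ℝ] EuclideanSpace ℝ (Fin m) := B.toLinearMap.comp K.subtype with hg
  have hker : LinearMap.ker g = ⊥ := by
    rw [LinearMap.ker_eq_bot']
    intro q hq
    have h1 : (q : EuclideanSpace ℝ (Fin n)) ∈ LinearMap.ker (B : EuclideanSpace ℝ (Fin n) →ₗ[ℝ] EuclideanSpace ℝ (Fin m)) := by
      simpa [hg] using hq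
    have h2 : ⟪(q : EuclideanSpace ℝ (Fin n)), (q : EuclideanSpace ℝ (Fin n))⟫_ℝ = 0 :=
      (Submodule.mem_orthogonal _ _).1 q.2 _ h1
    exact Subtype.ext (by simpa using inner_self_eq_zero.1 h2)
  obtain ⟨c0, hc0, hanti⟩ := g.exists_antilipschitzWith hker
  refine ⟨c0, hc0, ?_⟩
  intro q hq
  have h3 := hanti.le_mul_dist (⟨q, hq⟩ : K) 0
  rw [map_zero, dist_zero_right, dist_zero_right] at h3
  simpa [hg] using h3

end Aux

set_option maxHeartbeats 2000000 in
/-- Theorem 2: `A` satisfies RRC at sparsity `k` for `J` with some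
constant `C > 0` iff there is `d > 0` such that every subspace `ν'` of the same dimension
as `ker A` with `‖P_{ker A} − P_{ν'}‖ ≤ d` satisfies NSP at sparsity `k` for `J`. -/
theorem stmt3 {m n : ℕ} (F : ℝ → ℝ) (hF : SparsenessMeasure F)
    (A : Matrix (Fin m) (Fin n) ℝ) (k : ℕ) (hk : 1 ≤ k) :
    (∃ C > 0, RRC A k F C) ↔
      (∃ d > 0, ∀ ν' : Submodule ℝ (EuclideanSpace ℝ (Fin n)),
        Module.finrank ℝ ν' = Module.finrank ℝ (LinearMap.ker (mulVecCLM A : EuclideanSpace ℝ (Fin n) →ₗ[ℝ] EuclideanSpace ℝ (Fin m))) →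
        ‖projCLM (LinearMap.ker (mulVecCLM A : EuclideanSpace ℝ (Fin n) →ₗ[ℝ] EuclideanSpace ℝ (Fin m))) - projCLM ν'‖ ≤ d →
        NSP ν' k F) := by
  have hF0 : F 0 = 0 := (hF.2.1 0 le_rfl).2 rfl
  constructor
  · rintro ⟨C, hC, hRRC⟩
    set B := mulVecCLM A with hBdef
    set ν := LinearMap.ker (B : EuclideanSpace ℝ (Fin n) →ₗ[ℝ] EuclideanSpace ℝ (Fin m)) with hνdef
    refine ⟨1 / (2 * C * (‖B‖ + 1)), by positivity, ?_⟩
    intro ν' _hdim hdist z' hz' hz'0 T hT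
    by_contra hcon
    push_neg at hcon
    have hzn : (0:ℝ) < ‖z'‖ := norm_pos_iff.2 hz'0
    set xbar : EuclideanSpace ℝ (Fin n) := WithLp.toLp 2 (fun i => if i ∈ T then -z' i else 0) with hxbar
    set xhat : EuclideanSpace ℝ (Fin n) := z' + xbar with hxhat
    have hxbar_app : ∀ i, xbar i = if i ∈ T then -z' i else 0 := fun i => rfl
    have hxhat_app : ∀ i, xhat i = if i ∈ T then 0 else z' i := by
      intro i
      have h0 : xhat i = z' i + xbar i := rfl
      rw [h0, hxbar_app]
      by_cases hi : i ∈ T <;> simp [hi]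
    have hsparse : Sparse k xbar := ⟨T, hT, fun i hi => by rw [hxbar_app, if_neg hi]⟩
    have hcost : costJ F xhat ≤ costJ F xbar := by
      have e1 : costJ F xhat = costJT F Tᶜ z' := by
        rw [costJ, ← Finset.sum_add_sum_compl T]
        have h0 : ∑ i ∈ T, F |xhat i| = 0 :=
          Finset.sum_eq_zero fun i hi => by rw [hxhat_app, if_pos hi, abs_zero, hF0]
        rw [h0, zero_add, costJT]
        exact Finset.sum_congr rfl fun i hi => by
          rw [hxhat_app, if_neg (Finset.mem_compl.1 hi)]
      have e2 : costJ F xbar = costJT F T z' := by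
        rw [costJ, ← Finset.sum_add_sum_compl T]
        have h0 : ∑ i ∈ Tᶜ, F |xbar i| = 0 :=
          Finset.sum_eq_zero fun i hi => by
            rw [hxbar_app, if_neg (Finset.mem_compl.1 hi), abs_zero, hF0]
        rw [h0, add_zero, costJT]
        exact Finset.sum_congr rfl fun i hi => by rw [hxbar_app, if_pos hi, abs_neg]
      rw [e1, e2]
      exact hcon
    set ε := (‖B‖ + 1) * (1 / (2 * C * (‖B‖ + 1))) * ‖z'‖ with hε
    have hεpos : 0 < ε := by positivity
    have hproj' : projCLM ν' z' = z' := by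
      rw [projCLM_apply_aux]
      exact orthogonalProjection_eq_self_iff.2 hz'
    have hηbound : ‖z' - projCLM ν z'‖ ≤ 1 / (2 * C * (‖B‖ + 1)) * ‖z'‖ := by
      have e : z' - projCLM ν z' = (projCLM ν' - projCLM ν) z' := by
        rw [ContinuousLinearMap.sub_apply, hproj']
      rw [e]
      calc ‖(projCLM ν' - projCLM ν) z'‖ ≤ ‖projCLM ν' - projCLM ν‖ * ‖z'‖ :=
            (projCLM ν' - projCLM ν).le_opNorm z'
        _ ≤ 1 / (2 * C * (‖B‖ + 1)) * ‖z'‖ := by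
            rw [norm_sub_rev]
            exact mul_le_mul_of_nonneg_right hdist (norm_nonneg _)
    have hBz' : ‖B z'‖ ≤ ε := by
      have h1 : B (projCLM ν z') = 0 := by
        have hmem : projCLM ν z' ∈ ν := by
          rw [projCLM_apply_aux]; exact SetLike.coe_mem _
        exact LinearMap.mem_ker.1 hmem
      have h2 : B z' = B (z' - projCLM ν z') := by rw [map_sub, h1, sub_zero]
      rw [h2]
      calc ‖B (z' - projCLM ν z')‖ ≤ ‖B‖ * ‖z' - projCLM ν z'‖ := B.le_opNorm _
        _ ≤ ‖B‖ * (1 / (2 * C * (‖B‖ + 1)) * ‖z'‖) :=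
            mul_le_mul_of_nonneg_left hηbound (norm_nonneg _)
        _ ≤ ε := by
            rw [hε]
            have hBn : (0:ℝ) ≤ ‖B‖ := norm_nonneg _
            have hpos : (0:ℝ) < 1 / (2 * C * (‖B‖ + 1)) * ‖z'‖ := by positivity
            nlinarith
    have hfeas : ‖B xhat - (B xbar + 0)‖ ≤ ε := by
      have e : B xhat - (B xbar + 0) = B z' := by rw [hxhat, map_add]; abel
      rw [e]
      exact hBz'
    have hre := hRRC xbar hsparse ε hεpos 0 (by simp [hεpos.le]) xhat hfeas hcost
    have hnorm : ‖xbar - xhat‖ = ‖z'‖ := by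
      have e : xbar - xhat = -z' := by rw [hxhat]; abel
      rw [e, norm_neg]
    rw [hnorm] at hre
    have harith : C * ε = ‖z'‖ / 2 := by
      rw [hε]
      field_simp
    rw [harith] at hre
    linarith
  · rintro ⟨d, hd, hNSP⟩
    set B := mulVecCLM A with hBdef
    set ν := LinearMap.ker (B : EuclideanSpace ℝ (Fin n) →ₗ[ℝ] EuclideanSpace ℝ (Fin m)) with hνdef
    obtain ⟨c, hc, hlow⟩ := exists_lower_aux A
    refine ⟨2 * c + 8 * c / d + 1, by positivity, ?_⟩
    rintro xbar ⟨T, hT, hTzero⟩ ε hε v hv xhat hfeas hcost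
    set z := xhat - xbar with hz
    by_cases hz0 : z = 0
    · have e : xbar - xhat = -z := by rw [hz]; abel
      rw [e, hz0, norm_neg, norm_zero]
      positivity
    have hzi : ∀ i, z i = xhat i - xbar i := fun i => rfl
    have hkey : costJT F Tᶜ z ≤ costJT F T z := by
      have e1 : costJ F xhat = costJT F T xhat + costJT F Tᶜ z := by
        rw [costJ, ← Finset.sum_add_sum_compl T, costJT, costJT]
        congr 1
        exact Finset.sum_congr rfl fun i hi => by
          rw [hzi, hTzero i (Finset.mem_compl.1 hi), sub_zero]
      have e2 : costJ F xbar = costJT F T xbar := by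
        rw [costJ, ← Finset.sum_add_sum_compl T]
        have h0 : ∑ i ∈ Tᶜ, F |xbar i| = 0 :=
          Finset.sum_eq_zero fun i hi => by
            rw [hTzero i (Finset.mem_compl.1 hi), abs_zero, hF0]
        rw [h0, add_zero, costJT]
      have e3 : costJT F T xbar ≤ costJT F T xhat + costJT F T z := by
        rw [costJT, costJT, costJT, ← Finset.sum_add_distrib]
        apply Finset.sum_le_sum
        intro i _
        have e : xbar i = xhat i + -z i := by rw [hzi]; ring
        calc F |xbar i| = F |xhat i + -z i| := by rw [e]
          _ ≤ F |xhat i| + F |(-z i)| := hF.2.2 _ _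
          _ = F |xhat i| + F |z i| := by rw [abs_neg]
      rw [e1, e2] at hcost
      linarith
    have hBz : ‖B z‖ ≤ 2 * ε := by
      have e : B z = (B xhat - (B xbar + v)) + v := by rw [hz, map_sub]; abel
      rw [e]
      calc ‖(B xhat - (B xbar + v)) + v‖ ≤ ‖B xhat - (B xbar + v)‖ + ‖v‖ := norm_add_le _ _
        _ ≤ ε + ε := add_le_add hfeas hv
        _ = 2 * ε := by ring
    set u : EuclideanSpace ℝ (Fin n) := projCLM ν z with hu
    have humem : u ∈ ν := by rw [hu, projCLM_apply_aux]; exact SetLike.coe_mem _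
    set q := z - u with hq
    have hzuq : z = u + q := by rw [hq]; abel
    have hqmem : q ∈ νᗮ := by
      rw [hq, hu, projCLM_apply_aux]
      exact sub_orthogonalProjection_mem_orthogonal (K := ν) z
    have hBu : B u = 0 := LinearMap.mem_ker.1 humem
    have hqbound : ‖q‖ ≤ 2 * c * ε := by
      have e : B q = B z := by rw [hq, map_sub, hBu, sub_zero]
      calc ‖q‖ ≤ c * ‖B q‖ := hlow q hqmem
        _ = c * ‖B z‖ := by rw [e]
        _ ≤ c * (2 * ε) := mul_le_mul_of_nonneg_left hBz hc.le
        _ = 2 * c * ε := by ring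
    have hubound : ‖u‖ ≤ 8 * c * ε / d := by
      by_contra hcon
      push_neg at hcon
      have h8 : (0:ℝ) < 8 * c * ε / d := by positivity
      have hu0 : u ≠ 0 := by
        intro h
        rw [h, norm_zero] at hcon
        linarith
      have hun : (0:ℝ) < ‖u‖ := norm_pos_iff.2 hu0
      obtain ⟨ν'', hmem'', hdim'', hdist''⟩ := perturbed_subspace_aux humem hu0 hqmem
      have hdle : 4 * ‖q‖ / ‖u‖ ≤ d := by
        rw [div_le_iff₀ hun]
        have h1 : 8 * c * ε / d * d = 8 * c * ε := by field_simp
        nlinarith [hqbound, hcon]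
      have hnsp := hNSP ν'' hdim'' (le_trans hdist'' hdle)
      have := hnsp z (by rw [hzuq]; exact hmem'') hz0 T hT
      linarith
    have hzle : ‖z‖ ≤ ‖u‖ + ‖q‖ := by
      rw [hzuq]
      exact norm_add_le _ _
    have e : xbar - xhat = -z := by rw [hz]; abel
    rw [e, norm_neg]
    calc ‖z‖ ≤ ‖u‖ + ‖q‖ := hzle
      _ ≤ 8 * c * ε / d + 2 * c * ε := add_le_add hubound hqbound
      _ ≤ (2 * c + 8 * c / d + 1) * ε := by
          have h1 : 8 * c * ε / d = 8 * c / d * ε := by ring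
          nlinarith [hε.le]
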